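/- Let G be a non-hamiltonian graph of order m with an H-path connected edge set S of size n ≥ 2. For each edge e_i = (v_i, w_i) of S, attach a complete graph K^i on k vertices so that every vertex of K^i is adjacent to both v_i and w_i (and to all other vertices of K^i), obtaining a graph G_k. Then G_k is not hamiltonian. -/

import Mathlib

/-- A set `S` of edges of `G` is H-path connected if for every two distinct edges
`e ≠ f` of `S` there is a hamiltonian path of `G` with one endpoint in `e`, the other
endpoint in `f`, containing every edge of `S \ {e, f}`. -/
def HPathConnected {V : Type*} [DecidableEq V] (G : SimpleGraph V) (S : Finset (Sym2 V)) :
    Prop :=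
  ↑S ⊆ G.edgeSet ∧ ∀ e ∈ S, ∀ f ∈ S, e ≠ f →
    ∃ (u v : V) (p : G.Walk u v), p.IsHamiltonian ∧ u ∈ e ∧ v ∈ f ∧
      ∀ g ∈ S, g ≠ e → g ≠ f → g ∈ p.edges

/-- The graph `G_k` obtained from `G` by attaching, to each edge `e i = (v i, w i)`,
a complete graph on `k` new vertices each of which is also adjacent to `v i` and `w i`. -/
def attachCliques {V : Type*} (G : SimpleGraph V) (n k : ℕ) (v w : Fin n → V) :
    SimpleGraph (V ⊕ (Fin n × Fin k)) :=
  SimpleGraph.fromRel (fun p q =>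
    match p, q with
    | Sum.inl a, Sum.inl b => G.Adj a b
    | Sum.inl a, Sum.inr (i, _) => a = v i ∨ a = w i
    | Sum.inr (i, _), Sum.inr (j, _) => i = j
    | Sum.inr _, Sum.inl _ => False)

namespace StmtAux

open SimpleGraph

variable {V : Type*} [DecidableEq V] {G : SimpleGraph V} {n k : ℕ} {v w : Fin n → V}

/-- Projection to the original vertex set. -/
def po : V ⊕ (Fin n × Fin k) → Option V
  | Sum.inl x => some x
  | Sum.inr _ => none

lemma count_po (l : List (V ⊕ (Fin n × Fin k))) (a : V) :
    (l.filterMap po).count a = @List.count _ instBEqOfDecidableEq (Sum.inl a) l := by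
  induction l with
  | nil => simp
  | cons hd tl ih =>
    cases hd with
    | inl x =>
      simp only [List.filterMap_cons, po, List.count_cons, ih, beq_iff_eq, Sum.inl.injEq]
    | inr y =>
      simp [List.filterMap_cons, po, List.count_cons, ih, beq_iff_eq]

lemma mem_po {l : List (V ⊕ (Fin n × Fin k))} {a : V} :
    a ∈ l.filterMap po ↔ Sum.inl a ∈ l := by
  rw [List.mem_filterMap]
  constructor
  · rintro ⟨b, hb, hba⟩
    cases b with
    | inl x =>
      obtain rfl : x = a := by simpa [po] using hba
      exact hb
    | inr y => simp [po] at hba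
  · intro h
    exact ⟨Sum.inl a, h, rfl⟩

lemma adj_inl_inl {a b : V} :
    (attachCliques G n k v w).Adj (Sum.inl a) (Sum.inl b) ↔ G.Adj a b := by
  simp only [attachCliques, SimpleGraph.fromRel_adj]
  constructor
  · rintro ⟨-, h | h⟩
    · exact h
    · exact h.symm
  · intro h
    exact ⟨by simpa using h.ne, Or.inl h⟩

lemma adj_inl_inr {a : V} {i : Fin n} {c : Fin k} :
    (attachCliques G n k v w).Adj (Sum.inl a) (Sum.inr (i, c)) → a = v i ∨ a = w i := by
  simp only [attachCliques, SimpleGraph.fromRel_adj]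
  rintro ⟨-, h | h⟩
  · exact h
  · exact h.elim

lemma adj_inr_inl {a : V} {i : Fin n} {c : Fin k} :
    (attachCliques G n k v w).Adj (Sum.inr (i, c)) (Sum.inl a) → a = v i ∨ a = w i := by
  intro h
  exact adj_inl_inr h.symm

lemma adj_inr_inr {i j : Fin n} {c d : Fin k} :
    (attachCliques G n k v w).Adj (Sum.inr (i, c)) (Sum.inr (j, d)) → i = j := by
  simp only [attachCliques, SimpleGraph.fromRel_adj]
  rintro ⟨-, h | h⟩
  · exact h
  · exact h.symm

/-- Key contraction lemma: from a nodup-support walk in `G_k` ending at an original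
vertex, produce a walk in `G` whose support is the projection of the original support. -/
lemma key (hadj : ∀ i, G.Adj (v i) (w i)) :
    ∀ {s t' : V ⊕ (Fin n × Fin k)} (q : (attachCliques G n k v w).Walk s t'),
    q.support.Nodup → ∀ t : V, t' = Sum.inl t →
    ∃ (x : V) (r : G.Walk x t), r.support = q.support.filterMap po ∧
      (∀ y, s = Sum.inl y → x = y) ∧
      (∀ i c, s = Sum.inr (i, c) → x = v i ∨ x = w i) := by
  intro s t' q
  induction q with
  | nil =>
    rintro _ t rfl
    refine ⟨t, SimpleGraph.Walk.nil, by simp [po], fun y hy => by injection hy, ?_⟩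
    intro i c h
    exact absurd h (by simp)
  | @cons s s' t'' h q ih =>
    rintro hnd t rfl
    rw [SimpleGraph.Walk.support_cons] at hnd
    obtain ⟨x', r', hsupp', hinl', hinr'⟩ := ih hnd.of_cons t rfl
    cases s with
    | inl a =>
      cases s' with
      | inl b =>
        have hab : G.Adj a b := adj_inl_inl.1 h
        have hx' : x' = b := hinl' b rfl
        subst hx'
        refine ⟨a, SimpleGraph.Walk.cons hab r', ?_, fun y hy => by injection hy, ?_⟩
        · simp [SimpleGraph.Walk.support_cons, hsupp', po]
        · intro i c hic; exact absurd hic (by simp)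
      | inr p =>
        obtain ⟨i, c⟩ := p
        have ha : a = v i ∨ a = w i := adj_inl_inr h
        have hx' : x' = v i ∨ x' = w i := hinr' i c rfl
        have hxmem : Sum.inl x' ∈ q.support := by
          rw [← mem_po, ← hsupp']
          exact r'.start_mem_support
        have hax : a ≠ x' := by
          rintro rfl
          exact hnd.notMem hxmem
        have hG : G.Adj a x' := by
          rcases ha with rfl | rfl <;> rcases hx' with rfl | rfl
          · exact absurd rfl hax
          · exact hadj i
          · exact (hadj i).symm
          · exact absurd rfl hax
        refine ⟨a, SimpleGraph.Walk.cons hG r', ?_, fun y hy => by injection hy, ?_⟩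
        · simp [SimpleGraph.Walk.support_cons, hsupp', po]
        · intro i' c' hic; exact absurd hic (by simp)
    | inr p =>
      obtain ⟨i, c⟩ := p
      cases s' with
      | inl b =>
        have hb : b = v i ∨ b = w i := adj_inr_inl h
        have hx' : x' = b := hinl' b rfl
        refine ⟨x', r', ?_, ?_, ?_⟩
        · simp [SimpleGraph.Walk.support_cons, hsupp', po, List.filterMap_cons]
        · intro y hy; exact absurd hy (by simp)
        · intro i' c' hic
          obtain ⟨hi, -⟩ : i = i' ∧ c = c' := by
            simpa [Prod.ext_iff] using hic
          subst hi
          rw [hx']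
          exact hb
      | inr p' =>
        obtain ⟨j, d⟩ := p'
        have hij : i = j := adj_inr_inr h
        have hx' : x' = v j ∨ x' = w j := hinr' j d rfl
        refine ⟨x', r', ?_, ?_, ?_⟩
        · simp [SimpleGraph.Walk.support_cons, hsupp', po, List.filterMap_cons]
        · intro y hy; exact absurd hy (by simp)
        · intro i' c' hic
          obtain ⟨hi, -⟩ : i = i' ∧ c = c' := by
            simpa [Prod.ext_iff] using hic
          subst hi
          rw [hij]
          exact hx'

/-- In a nodup-support walk of length at least 2 from `x` to `t`,
the edge `s(t, x)` does not occur. -/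
lemma no_edge {x t : V} (r : G.Walk x t) (hnd : r.support.Nodup) (hlen : 2 ≤ r.length) :
    s(t, x) ∉ r.edges := by
  cases r with
  | nil => simp
  | @cons _ y _ h r' =>
    rw [SimpleGraph.Walk.edges_cons]
    intro hmem
    rcases List.mem_cons.1 hmem with heq | hmem'
    · rw [Sym2.eq_iff] at heq
      rcases heq with ⟨rfl, rfl⟩ | ⟨rfl, -⟩
      · exact h.ne rfl
      · -- r' : Walk t t, so r' must be nil, contradicting the length bound
        cases r' with
        | nil => simp at hlen
        | cons h'' r'' =>
          rw [SimpleGraph.Walk.support_cons, SimpleGraph.Walk.support_cons] at hnd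
          exact (hnd.of_cons).notMem r''.end_mem_support
    · rw [SimpleGraph.Walk.support_cons] at hnd
      exact hnd.notMem (r'.snd_mem_support_of_mem_edges hmem')

lemma closed_nodup_support {a : V} (r : G.Walk a a) (hnd : r.support.Nodup) :
    r.support = [a] := by
  cases r with
  | nil => simp
  | cons h r' =>
    rw [SimpleGraph.Walk.support_cons] at hnd
    exact absurd r'.end_mem_support hnd.notMem

end StmtAux

theorem stmt_9 {V : Type*} [Fintype V] [DecidableEq V] (G : SimpleGraph V)
    (hnonham : ¬ G.IsHamiltonian) (n k : ℕ) (hn : 2 ≤ n) (hk : 1 ≤ k)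
    (v w : Fin n → V) (hadj : ∀ i, G.Adj (v i) (w i))
    (hinj : Function.Injective fun i => s(v i, w i))
    (hS : HPathConnected G (Finset.univ.image fun i => s(v i, w i))) :
    ¬ (attachCliques G n k v w).IsHamiltonian := by
  classical
  open StmtAux SimpleGraph in
  intro hham
  -- the big graph has more than one vertex
  have hcard : Fintype.card (V ⊕ (Fin n × Fin k)) ≠ 1 := by
    have h2 : 2 ≤ n * k := le_trans (by omega) (Nat.mul_le_mul hn hk)
    simp only [Fintype.card_sum, Fintype.card_prod, Fintype.card_fin]
    omega
  obtain ⟨s₀, c, hc⟩ := hham hcard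
  set i0 : Fin n := ⟨0, by omega⟩ with hi0
  set i1 : Fin n := ⟨1, by omega⟩ with hi1
  set a0 : V := v i0 with ha0
  -- rotate the cycle to start at `inl a0`
  have mem : Sum.inl a0 ∈ c.support := hc.mem_support _
  set c' := c.rotate _ mem with hc'
  have h1 : ∀ z : V ⊕ (Fin n × Fin k),
      @List.count _ instBEqOfDecidableEq z c'.support.tail = 1 := by
    intro z
    rw [hc', @List.Perm.count_eq _ instBEqOfDecidableEq _ _ (SimpleGraph.Walk.support_rotate c _ mem).perm]
    rw [← SimpleGraph.Walk.support_tail_of_not_nil c hc.1.not_nil]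
    exact hc.isHamiltonian_tail z
  clear_value c'
  cases c' with
  | nil => simpa using h1 (Sum.inl a0)
  | @cons _ s' _ h q =>
    rw [SimpleGraph.Walk.support_cons] at h1
    simp only [List.tail_cons] at h1
    have hnd : q.support.Nodup :=
      (@List.nodup_iff_count_le_one _ instBEqOfDecidableEq _ _).2 fun z => le_of_eq (h1 z)
    obtain ⟨x, r, hsupp, hinl, hinr⟩ := key hadj q hnd a0 rfl
    -- every original vertex lies on `r`
    have hrcount : ∀ y : V, r.support.count y = 1 := by
      intro y
      rw [hsupp, count_po]
      exact h1 (Sum.inl y)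
    have hrmem : ∀ y : V, y ∈ r.support := by
      intro y
      rw [← List.count_pos_iff, hrcount y]
      omega
    have hrnd : r.support.Nodup :=
      List.nodup_iff_count_le_one.2 fun z => le_of_eq (hrcount z)
    -- find a vertex z of the second edge not in the first edge
    have hne01 : s(v i0, w i0) ≠ s(v i1, w i1) := by
      apply hinj.ne
      simp [hi0, hi1, Fin.ext_iff]
    obtain ⟨z, hz0v, hz0w⟩ : ∃ z : V, z ≠ v i0 ∧ z ≠ w i0 := by
      by_cases h1v : v i1 ≠ v i0 ∧ v i1 ≠ w i0
      · exact ⟨v i1, h1v.1, h1v.2⟩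
      · refine ⟨w i1, ?_, ?_⟩ <;> rw [not_and_or, not_not, not_not] at h1v <;>
          rcases h1v with hv | hv
        · intro hw
          exact (hadj i1).ne' (hw.trans hv.symm)
        · intro hw
          exact hne01 (by rw [← hv, ← hw, Sym2.eq_swap])
        · intro hw
          exact hne01 (by rw [← hv, ← hw])
        · intro hw
          exact (hadj i1).ne' (hw.trans hv.symm)
    -- the start of r is adjacent to a0 in G
    have hG : G.Adj a0 x := by
      cases s' with
      | inl b =>
        have := hinl b rfl
        subst this
        exact adj_inl_inl.1 h
      | inr p =>
        obtain ⟨i, cc⟩ := p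
        have ha : a0 = v i ∨ a0 = w i := adj_inl_inr h
        have hx : x = v i ∨ x = w i := hinr i cc rfl
        have hax : a0 ≠ x := by
          rintro rfl
          have := closed_nodup_support r hrnd
          have hw0 : w i0 ∈ r.support := hrmem (w i0)
          rw [this] at hw0
          simp only [List.mem_singleton] at hw0
          exact (hadj i0).ne hw0.symm
        rcases ha with h1' | h1' <;> rcases hx with h2' | h2'
        · exact absurd (h1'.trans h2'.symm) hax
        · rw [h1', h2']; exact hadj i
        · rw [h1', h2']; exact (hadj i).symm
        · exact absurd (h1'.trans h2'.symm) hax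
    -- r has length ≥ 2
    have hlen : 2 ≤ r.length := by
      have hsub : ({a0, w i0, z} : Finset V) ⊆ r.support.toFinset := by
        intro y hy
        rw [List.mem_toFinset]
        exact hrmem y
      have hcard3 : ({a0, w i0, z} : Finset V).card = 3 := by
        rw [Finset.card_insert_of_notMem, Finset.card_insert_of_notMem,
          Finset.card_singleton]
        · simpa using hz0w.symm
        · simp only [Finset.mem_insert, Finset.mem_singleton, not_or]
          exact ⟨(hadj i0).ne, fun hh => hz0v hh.symm⟩
      have h3 : 3 ≤ r.support.length := by
        calc 3 = ({a0, w i0, z} : Finset V).card := hcard3.symm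
        _ ≤ r.support.toFinset.card := Finset.card_le_card hsub
        _ ≤ r.support.length := r.support.toFinset_card_le
      rw [SimpleGraph.Walk.length_support] at h3
      omega
    -- assemble the hamiltonian cycle of G
    have hcyc : (SimpleGraph.Walk.cons hG r).IsCycle := by
      rw [SimpleGraph.Walk.cons_isCycle_iff]
      exact ⟨SimpleGraph.Walk.IsPath.mk' hrnd, no_edge r hrnd hlen⟩
    apply hnonham
    intro _
    refine ⟨a0, SimpleGraph.Walk.cons hG r, ?_⟩
    rw [SimpleGraph.Walk.isHamiltonianCycle_iff_isCycle_and_support_count_tail_eq_one]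
    refine ⟨hcyc, fun y => ?_⟩
    rw [SimpleGraph.Walk.support_cons, List.tail_cons]
    exact hrcount y
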